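/- Let n ≥ 1, let f : ℝ → ℂ be any function, and let x₀,…,x_n ∈ ℝ be pairwise distinct. Then f^{[n]}(x₀,…,x_n) = Σ_{p=0}^n (−1)^{n−p} Σ_{0 < j₁ < ⋯ < j_p ≤ n} (f·u^p)^{[p]}(x₀, x_{j₁},…,x_{j_p}) · ∏_{k=1}^n (x_k − i)⁻¹, where the inner sum runs over all strictly increasing p-tuples of indices from {1,…,n}, and the p = 0 term is (−1)^n f(x₀)·∏_{k=1}^n (x_k − i)⁻¹. -/

import Mathlib

open Finset

noncomputable def divDiff {m : ℕ} (f : ℝ → ℂ) (x : Fin (m + 1) → ℝ) : ℂ :=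
  ∑ j, f (x j) / ∏ k ∈ Finset.univ.erase j, ((x j : ℂ) - (x k : ℂ))

lemma prod_erase_zero' {m : ℕ} (h : Fin (m+1) → ℂ) :
    ∏ k ∈ (univ : Finset (Fin (m+1))).erase 0, h k = ∏ k : Fin m, h k.succ := by
  rw [Fin.univ_succ, Finset.erase_cons, Finset.prod_map]
  rfl

lemma prod_erase_succ' {m : ℕ} (i : Fin m) (h : Fin (m+1) → ℂ) :
    ∏ k ∈ (univ : Finset (Fin (m+1))).erase i.succ, h k
      = h 0 * ∏ k ∈ (univ : Finset (Fin m)).erase i, h k.succ := by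
  rw [Fin.univ_succ, Finset.erase_cons_of_ne _ (Fin.succ_ne_zero i).symm, Finset.prod_cons]
  congr 1
  have : ((univ : Finset (Fin m)).map ⟨Fin.succ, Fin.succ_injective _⟩).erase i.succ
      = ((univ : Finset (Fin m)).erase i).map ⟨Fin.succ, Fin.succ_injective _⟩ := by
    rw [Finset.map_erase]; rfl
  rw [this, Finset.prod_map]
  rfl

lemma image_univ_oE {n p : ℕ} (s : Finset (Fin n)) (h : s.card = p) :
    (Finset.univ : Finset (Fin p)).image (s.orderEmbOfFin h) = s := by
  rw [← Finset.coe_inj, Finset.coe_image, Finset.coe_univ, Set.image_univ]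
  exact Finset.range_orderEmbOfFin s h

lemma prod_oE {n p : ℕ} (s : Finset (Fin n)) (h : s.card = p)
    (F : Fin n → ℂ) : ∏ i : Fin p, F (s.orderEmbOfFin h i) = ∏ k ∈ s, F k := by
  conv_rhs => rw [← image_univ_oE s h]
  rw [Finset.prod_image]
  intro a _ b _ hab; exact (s.orderEmbOfFin h).injective hab

lemma sum_oE {n p : ℕ} (s : Finset (Fin n)) (h : s.card = p)
    (F : Fin n → ℂ) : ∑ i : Fin p, F (s.orderEmbOfFin h i) = ∑ k ∈ s, F k := by
  conv_rhs => rw [← image_univ_oE s h]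
  rw [Finset.sum_image]
  intro a _ b _ hab; exact (s.orderEmbOfFin h).injective hab

lemma prod_oE_erase {n p : ℕ} (s : Finset (Fin n)) (h : s.card = p) (i : Fin p)
    (F : Fin n → ℂ) :
    ∏ k ∈ (univ : Finset (Fin p)).erase i, F (s.orderEmbOfFin h k)
      = ∏ k ∈ s.erase (s.orderEmbOfFin h i), F k := by
  have heq : s.erase (s.orderEmbOfFin h i)
      = ((univ : Finset (Fin p)).erase i).image (s.orderEmbOfFin h) := by
    rw [Finset.image_erase (s.orderEmbOfFin h).injective, image_univ_oE s h]
  rw [heq, Finset.prod_image]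
  intro a _ b _ hab; exact (s.orderEmbOfFin h).injective hab

lemma key_sum {ι : Type*} [DecidableEq ι] (T : Finset ι) (c : ℂ) (b : ι → ℂ) :
    ∑ t ∈ T.powerset, (-1 : ℂ) ^ (T.card - t.card) * c ^ t.card * ∏ k ∈ T \ t, b k
      = ∏ k ∈ T, (c - b k) := by
  simp only [sub_eq_add_neg]
  rw [Finset.prod_add (fun _ : ι => c) (fun k => - b k) T]
  apply Finset.sum_congr rfl
  intro t ht
  rw [Finset.prod_const]
  have hsub : t ⊆ T := Finset.mem_powerset.1 ht
  have hcard : (T \ t).card = T.card - t.card := Finset.card_sdiff_of_subset hsub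
  have : ∏ k ∈ T \ t, (-b k) = (-1 : ℂ) ^ (T.card - t.card) * ∏ k ∈ T \ t, b k := by
    rw [← hcard]
    have h2 : ∀ k ∈ T \ t, -b k = (-1 : ℂ) * b k := fun k _ => by ring
    rw [Finset.prod_congr rfl h2, Finset.prod_mul_distrib, Finset.prod_const]
  rw [this]; ring

lemma divDiff_cons {p : ℕ} (g : ℝ → ℂ) (a : ℝ) (z : Fin p → ℝ) :
    divDiff g (Fin.cons a z) = g a / ∏ k : Fin p, ((a : ℂ) - (z k : ℂ))
      + ∑ i : Fin p, g (z i) /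
          (((z i : ℂ) - (a : ℂ)) * ∏ k ∈ (univ : Finset (Fin p)).erase i,
            ((z i : ℂ) - (z k : ℂ))) := by
  unfold divDiff
  rw [Fin.sum_univ_succ]
  congr 1
  · rw [prod_erase_zero']
    simp only [Fin.cons_zero, Fin.cons_succ]
  · apply Finset.sum_congr rfl
    intro i _
    rw [prod_erase_succ' i]
    simp only [Fin.cons_zero, Fin.cons_succ]

theorem stmt1 (n : ℕ) (hn : 1 ≤ n) (f : ℝ → ℂ) (x : Fin (n + 1) → ℝ)
    (hx : Function.Injective x) :
    divDiff f x =
      ∑ s : Finset (Fin n),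
        (-1 : ℂ) ^ (n - s.card) *
          divDiff (fun t : ℝ => f t * ((t : ℂ) - Complex.I) ^ s.card)
            (Fin.cons (x 0) fun i : Fin s.card => x (Fin.succ (s.orderIsoOfFin rfl i : Fin n))) *
          ∏ k : Fin n, ((x k.succ : ℂ) - Complex.I)⁻¹ := by
  classical
  have hne : ∀ j k : Fin (n+1), j ≠ k → ((x j : ℂ) - (x k : ℂ)) ≠ 0 := by
    intro j k hjk
    rw [sub_ne_zero]
    intro h
    exact hjk (hx (by exact_mod_cast h))
  have hu : ∀ j : Fin (n+1), ((x j : ℂ) - Complex.I) ≠ 0 := by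
    intro j h
    have := congrArg Complex.im h
    simp at this
  have hU : (∏ k : Fin n, ((x k.succ : ℂ) - Complex.I)) ≠ 0 :=
    Finset.prod_ne_zero_iff.2 fun k _ => hu k.succ
  have hUinv : (∏ k : Fin n, ((x k.succ : ℂ) - Complex.I)⁻¹)
      = (∏ k : Fin n, ((x k.succ : ℂ) - Complex.I))⁻¹ := by
    rw [← Finset.prod_inv_distrib]
  have hPu : (∏ k : Fin n, ((x 0 : ℂ) - (x k.succ : ℂ))) ≠ 0 :=
    Finset.prod_ne_zero_iff.2 fun k _ => hne 0 k.succ (Fin.succ_ne_zero k).symm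
  -- Step A : expansion of the inner divided differences
  have hdd : ∀ s : Finset (Fin n),
      divDiff (fun t : ℝ => f t * ((t : ℂ) - Complex.I) ^ s.card)
        (Fin.cons (x 0) fun i : Fin s.card => x (Fin.succ (s.orderIsoOfFin rfl i : Fin n)))
      = f (x 0) * ((x 0 : ℂ) - Complex.I) ^ s.card / ∏ k ∈ s, ((x 0 : ℂ) - (x k.succ : ℂ))
        + ∑ m ∈ s, f (x m.succ) * ((x m.succ : ℂ) - Complex.I) ^ s.card /
            (((x m.succ : ℂ) - (x 0 : ℂ)) *
              ∏ k ∈ s.erase m, ((x m.succ : ℂ) - (x k.succ : ℂ))) := by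
    intro s
    rw [divDiff_cons]
    simp only [Finset.coe_orderIsoOfFin_apply]
    congr 1
    · rw [prod_oE s rfl (fun k => ((x 0 : ℂ) - (x k.succ : ℂ)))]
    · rw [← sum_oE s rfl (fun m => f (x m.succ) * ((x m.succ : ℂ) - Complex.I) ^ s.card /
        (((x m.succ : ℂ) - (x 0 : ℂ)) * ∏ k ∈ s.erase m, ((x m.succ : ℂ) - (x k.succ : ℂ))))]
      apply Finset.sum_congr rfl
      intro i _
      rw [prod_oE_erase s rfl i
        (fun k => ((x (s.orderEmbOfFin rfl i).succ : ℂ) - (x k.succ : ℂ)))]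
  -- LHS expansion
  have hlhs : divDiff f x
      = f (x 0) / ∏ k : Fin n, ((x 0 : ℂ) - (x k.succ : ℂ))
        + ∑ m : Fin n, f (x m.succ) /
            (((x m.succ : ℂ) - (x 0 : ℂ)) *
              ∏ k ∈ (univ : Finset (Fin n)).erase m, ((x m.succ : ℂ) - (x k.succ : ℂ))) := by
    conv_lhs => rw [← Fin.cons_self_tail x]
    rw [divDiff_cons]
    rfl
  -- coefficient identity for j = 0
  have hcoef0 :
      ∑ s : Finset (Fin n), (-1 : ℂ) ^ (n - s.card) *
          (((x 0 : ℂ) - Complex.I) ^ s.card / ∏ k ∈ s, ((x 0 : ℂ) - (x k.succ : ℂ))) *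
          (∏ k : Fin n, ((x k.succ : ℂ) - Complex.I))⁻¹
        = (∏ k : Fin n, ((x 0 : ℂ) - (x k.succ : ℂ)))⁻¹ := by
    apply mul_right_cancel₀ (mul_ne_zero hPu hU)
    rw [Finset.sum_mul]
    have hterm : ∀ s ∈ (univ : Finset (Finset (Fin n))),
        (-1 : ℂ) ^ (n - s.card) *
            (((x 0 : ℂ) - Complex.I) ^ s.card / ∏ k ∈ s, ((x 0 : ℂ) - (x k.succ : ℂ))) *
            (∏ k : Fin n, ((x k.succ : ℂ) - Complex.I))⁻¹ *
            ((∏ k : Fin n, ((x 0 : ℂ) - (x k.succ : ℂ))) *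
              ∏ k : Fin n, ((x k.succ : ℂ) - Complex.I))
          = (-1 : ℂ) ^ ((univ : Finset (Fin n)).card - s.card) *
              ((x 0 : ℂ) - Complex.I) ^ s.card *
              ∏ k ∈ univ \ s, ((x 0 : ℂ) - (x k.succ : ℂ)) := by
      intro s _
      have hPs : (∏ k ∈ s, ((x 0 : ℂ) - (x k.succ : ℂ))) ≠ 0 :=
        Finset.prod_ne_zero_iff.2 fun k _ => hne 0 k.succ (Fin.succ_ne_zero k).symm
      have hsplit : (∏ k ∈ univ \ s, ((x 0 : ℂ) - (x k.succ : ℂ))) *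
          ∏ k ∈ s, ((x 0 : ℂ) - (x k.succ : ℂ))
          = ∏ k : Fin n, ((x 0 : ℂ) - (x k.succ : ℂ)) :=
        Finset.prod_sdiff (Finset.subset_univ s)
      rw [Finset.card_univ, Fintype.card_fin, ← hsplit]
      field_simp
    rw [Finset.sum_congr rfl hterm]
    have hk := key_sum (univ : Finset (Fin n)) ((x 0 : ℂ) - Complex.I)
      (fun k => (x 0 : ℂ) - (x k.succ : ℂ))
    rw [Finset.powerset_univ] at hk
    rw [hk]
    have h2 : ∏ k : Fin n, (((x 0 : ℂ) - Complex.I) - ((x 0 : ℂ) - (x k.succ : ℂ)))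
        = ∏ k : Fin n, ((x k.succ : ℂ) - Complex.I) :=
      Finset.prod_congr rfl fun k _ => by ring
    rw [h2, inv_mul_cancel_left₀ hPu]
  -- coefficient identity for j = m.succ
  have hcoefm : ∀ m : Fin n,
      ∑ s ∈ (univ : Finset (Finset (Fin n))).filter (fun s => m ∈ s),
          (-1 : ℂ) ^ (n - s.card) *
            (((x m.succ : ℂ) - Complex.I) ^ s.card /
              (((x m.succ : ℂ) - (x 0 : ℂ)) *
                ∏ k ∈ s.erase m, ((x m.succ : ℂ) - (x k.succ : ℂ)))) *
            (∏ k : Fin n, ((x k.succ : ℂ) - Complex.I))⁻¹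
        = (((x m.succ : ℂ) - (x 0 : ℂ)) *
            ∏ k ∈ (univ : Finset (Fin n)).erase m, ((x m.succ : ℂ) - (x k.succ : ℂ)))⁻¹ := by
    intro m
    have hd0 : ((x m.succ : ℂ) - (x 0 : ℂ)) ≠ 0 := hne m.succ 0 (Fin.succ_ne_zero m)
    have hPm : (∏ k ∈ (univ : Finset (Fin n)).erase m,
        ((x m.succ : ℂ) - (x k.succ : ℂ))) ≠ 0 :=
      Finset.prod_ne_zero_iff.2 fun k hk =>
        hne m.succ k.succ fun h => (Finset.mem_erase.1 hk).1 (Fin.succ_injective _ h.symm)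
    have hD : (((x m.succ : ℂ) - (x 0 : ℂ)) *
        ∏ k ∈ (univ : Finset (Fin n)).erase m, ((x m.succ : ℂ) - (x k.succ : ℂ))) ≠ 0 :=
      mul_ne_zero hd0 hPm
    -- reindex over subsets of univ.erase m
    have hre : ∑ s ∈ (univ : Finset (Finset (Fin n))).filter (fun s => m ∈ s),
          (-1 : ℂ) ^ (n - s.card) *
            (((x m.succ : ℂ) - Complex.I) ^ s.card /
              (((x m.succ : ℂ) - (x 0 : ℂ)) *
                ∏ k ∈ s.erase m, ((x m.succ : ℂ) - (x k.succ : ℂ)))) *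
            (∏ k : Fin n, ((x k.succ : ℂ) - Complex.I))⁻¹
        = ∑ t ∈ ((univ : Finset (Fin n)).erase m).powerset,
          (-1 : ℂ) ^ (n - (insert m t).card) *
            (((x m.succ : ℂ) - Complex.I) ^ (insert m t).card /
              (((x m.succ : ℂ) - (x 0 : ℂ)) *
                ∏ k ∈ (insert m t).erase m, ((x m.succ : ℂ) - (x k.succ : ℂ)))) *
            (∏ k : Fin n, ((x k.succ : ℂ) - Complex.I))⁻¹ := by
      apply Finset.sum_nbij' (i := fun s => s.erase m) (j := fun t => insert m t)
      · intro s hs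
        exact Finset.mem_powerset.2 (Finset.erase_subset_erase m (Finset.subset_univ s))
      · intro t ht
        simp
      · intro s hs
        exact Finset.insert_erase (Finset.mem_filter.1 hs).2
      · intro t ht
        exact Finset.erase_insert fun hm =>
          Finset.notMem_erase m univ (Finset.mem_powerset.1 ht hm)
      · intro s hs
        rw [Finset.insert_erase (Finset.mem_filter.1 hs).2]
    rw [hre]
    apply mul_right_cancel₀ (mul_ne_zero hD hU)
    rw [Finset.sum_mul]
    have hterm : ∀ t ∈ ((univ : Finset (Fin n)).erase m).powerset,
        (-1 : ℂ) ^ (n - (insert m t).card) *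
            (((x m.succ : ℂ) - Complex.I) ^ (insert m t).card /
              (((x m.succ : ℂ) - (x 0 : ℂ)) *
                ∏ k ∈ (insert m t).erase m, ((x m.succ : ℂ) - (x k.succ : ℂ)))) *
            (∏ k : Fin n, ((x k.succ : ℂ) - Complex.I))⁻¹ *
            ((((x m.succ : ℂ) - (x 0 : ℂ)) *
              ∏ k ∈ (univ : Finset (Fin n)).erase m, ((x m.succ : ℂ) - (x k.succ : ℂ))) *
              ∏ k : Fin n, ((x k.succ : ℂ) - Complex.I))
          = ((x m.succ : ℂ) - Complex.I) *
              ((-1 : ℂ) ^ (((univ : Finset (Fin n)).erase m).card - t.card) *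
                ((x m.succ : ℂ) - Complex.I) ^ t.card *
                ∏ k ∈ ((univ : Finset (Fin n)).erase m) \ t,
                  ((x m.succ : ℂ) - (x k.succ : ℂ))) := by
      intro t ht
      have htsub : t ⊆ (univ : Finset (Fin n)).erase m := Finset.mem_powerset.1 ht
      have hmt : m ∉ t := fun hm => Finset.notMem_erase m univ (htsub hm)
      have hPt : (∏ k ∈ t, ((x m.succ : ℂ) - (x k.succ : ℂ))) ≠ 0 :=
        Finset.prod_ne_zero_iff.2 fun k hk =>
          hne m.succ k.succ fun h =>
            (Finset.mem_erase.1 (htsub hk)).1 (Fin.succ_injective _ h.symm)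
      have hcard : (insert m t).card = t.card + 1 := Finset.card_insert_of_notMem hmt
      have hexp : n - (insert m t).card = ((univ : Finset (Fin n)).erase m).card - t.card := by
        rw [hcard, Finset.card_erase_of_mem (Finset.mem_univ m), Finset.card_univ,
          Fintype.card_fin]
        omega
      have hsplit : (∏ k ∈ ((univ : Finset (Fin n)).erase m) \ t,
            ((x m.succ : ℂ) - (x k.succ : ℂ))) *
          ∏ k ∈ t, ((x m.succ : ℂ) - (x k.succ : ℂ))
          = ∏ k ∈ (univ : Finset (Fin n)).erase m, ((x m.succ : ℂ) - (x k.succ : ℂ)) :=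
        Finset.prod_sdiff htsub
      rw [Finset.erase_insert hmt, hexp, hcard, ← hsplit]
      field_simp
      ring
    rw [Finset.sum_congr rfl hterm, ← Finset.mul_sum,
      key_sum ((univ : Finset (Fin n)).erase m) ((x m.succ : ℂ) - Complex.I)
        (fun k => (x m.succ : ℂ) - (x k.succ : ℂ))]
    have h2 : ∏ k ∈ (univ : Finset (Fin n)).erase m,
        (((x m.succ : ℂ) - Complex.I) - ((x m.succ : ℂ) - (x k.succ : ℂ)))
        = ∏ k ∈ (univ : Finset (Fin n)).erase m, ((x k.succ : ℂ) - Complex.I) :=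
      Finset.prod_congr rfl fun k _ => by ring
    rw [h2, Finset.mul_prod_erase univ (fun k => ((x k.succ : ℂ) - Complex.I)) (Finset.mem_univ m),
      inv_mul_cancel_left₀ hD]
  -- swap double sums
  have hswap : ∀ F : Finset (Fin n) → Fin n → ℂ,
      ∑ s : Finset (Fin n), ∑ m ∈ s, F s m
        = ∑ m : Fin n, ∑ s ∈ (univ : Finset (Finset (Fin n))).filter (fun s => m ∈ s), F s m := by
    intro F
    have h1 : ∀ s : Finset (Fin n), ∑ m ∈ s, F s m
        = ∑ m : Fin n, if m ∈ s then F s m else 0 := by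
      intro s
      rw [Finset.sum_ite_mem, Finset.univ_inter]
    simp_rw [h1]
    rw [Finset.sum_comm]
    apply Finset.sum_congr rfl
    intro m _
    rw [Finset.sum_filter]
  -- assemble
  have step1 : ∑ s : Finset (Fin n),
        (-1 : ℂ) ^ (n - s.card) *
          divDiff (fun t : ℝ => f t * ((t : ℂ) - Complex.I) ^ s.card)
            (Fin.cons (x 0) fun i : Fin s.card => x (Fin.succ (s.orderIsoOfFin rfl i : Fin n))) *
          ∏ k : Fin n, ((x k.succ : ℂ) - Complex.I)⁻¹
      = (∑ s : Finset (Fin n), f (x 0) *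
            ((-1 : ℂ) ^ (n - s.card) *
              (((x 0 : ℂ) - Complex.I) ^ s.card / ∏ k ∈ s, ((x 0 : ℂ) - (x k.succ : ℂ))) *
              (∏ k : Fin n, ((x k.succ : ℂ) - Complex.I))⁻¹))
        + ∑ s : Finset (Fin n), ∑ m ∈ s, f (x m.succ) *
            ((-1 : ℂ) ^ (n - s.card) *
              (((x m.succ : ℂ) - Complex.I) ^ s.card /
                (((x m.succ : ℂ) - (x 0 : ℂ)) *
                  ∏ k ∈ s.erase m, ((x m.succ : ℂ) - (x k.succ : ℂ)))) *
              (∏ k : Fin n, ((x k.succ : ℂ) - Complex.I))⁻¹) := by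
    rw [← Finset.sum_add_distrib]
    apply Finset.sum_congr rfl
    intro s _
    rw [hdd s, hUinv, mul_add, add_mul]
    congr 1
    · ring
    · rw [Finset.mul_sum, Finset.sum_mul]
      apply Finset.sum_congr rfl
      intro m _
      ring
  rw [hlhs, step1, hswap]
  congr 1
  · rw [← Finset.mul_sum, hcoef0, div_eq_mul_inv]
  · apply Finset.sum_congr rfl
    intro m _
    rw [← Finset.mul_sum, hcoefm m, div_eq_mul_inv]
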